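/- Let (Ω, Σ, μ) be a semifinite, decomposable measure space with μ ≠ 0 and let ω be a character of L^∞(Ω, μ). Then 𝒰_ω := {F ⊆ Ω measurable : ω([1_F]) = 1} is an ultrafilter on the measure algebra of (Ω, μ), and for every measurable essentially bounded f : Ω → ℂ one has lim_{𝒰_ω} f = ω([f]). -/

import Mathlib

open MeasureTheory

/-- An *ultrafilter on the measure algebra* of `(Ω, μ)`: a collection of measurable,
non-null subsets of `Ω`, closed under intersection and under almost-everywhere
enlargement, containing every measurable set or its complement. -/
structure IsMeasureUltrafilter {Ω : Type*} [MeasurableSpace Ω] (μ : Measure Ω)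
    (U : Set (Set Ω)) : Prop where
  measurableSet_of_mem : ∀ F ∈ U, MeasurableSet F
  not_null : ∀ F ∈ U, μ F ≠ 0
  inter_mem : ∀ F ∈ U, ∀ G ∈ U, F ∩ G ∈ U
  mem_of_ae_subset : ∀ F ∈ U, ∀ G : Set Ω, MeasurableSet G → μ (F \ G) = 0 → G ∈ U
  mem_or_compl_mem : ∀ F : Set Ω, MeasurableSet F → F ∈ U ∨ Fᶜ ∈ U

/-- `UltraLim μ U f a` means `lim_U f = a`: for every `ε > 0` there is `F ∈ U` such that
all averages of `f` over measurable subsets of `F` of finite positive measure are within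
`ε` of `a`. -/
def UltraLim {Ω : Type*} [MeasurableSpace Ω] (μ : Measure Ω) (U : Set (Set Ω))
    (f : Ω → ℂ) (a : ℂ) : Prop :=
  ∀ ε : ℝ, 0 < ε → ∃ F ∈ U, ∀ X : Set Ω, X ⊆ F → MeasurableSet X →
    0 < μ X → μ X < ⊤ → ‖(μ X).toReal⁻¹ • ∫ x in X, f x ∂μ - a‖ < ε

/-- A measure is *semifinite* if every measurable set of infinite measure contains a
measurable subset of finite positive measure. -/
def Semifinite {Ω : Type*} [MeasurableSpace Ω] (μ : Measure Ω) : Prop :=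
  ∀ E : Set Ω, MeasurableSet E → μ E = ⊤ →
    ∃ F : Set Ω, F ⊆ E ∧ MeasurableSet F ∧ 0 < μ F ∧ μ F < ⊤

universe u

/-- A measure is *decomposable* if there is a partition of `Ω` into measurable sets of
finite measure which detects measurability and along which `μ` sums. -/
def Decomposable {Ω : Type u} [MeasurableSpace Ω] (μ : Measure Ω) : Prop :=
  ∃ (ι : Type u) (P : ι → Set Ω),
    (∀ i, MeasurableSet (P i)) ∧ (∀ i, μ (P i) < ⊤) ∧
    (Pairwise fun i j => Disjoint (P i) (P j)) ∧
    (⋃ i, P i) = Set.univ ∧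
    (∀ E : Set Ω, (∀ i, MeasurableSet (E ∩ P i)) → MeasurableSet E) ∧
    (∀ E : Set Ω, MeasurableSet E → μ E = ∑' i, μ (E ∩ P i))

open Filter in
/-- `ℂ`-algebra structure on the algebra of germs of `ℂ`-valued functions along a filter. -/
noncomputable instance germAlgebra {α : Type*} {l : Filter α} :
    Algebra ℂ (Filter.Germ l ℂ) :=
  Algebra.ofModule
    (fun r x y => Filter.Germ.inductionOn₂ x y fun f g => by
      simp only [← Filter.Germ.coe_smul, ← Filter.Germ.coe_mul, smul_mul_assoc])
    (fun r x y => Filter.Germ.inductionOn₂ x y fun f g => by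
      simp only [← Filter.Germ.coe_smul, ← Filter.Germ.coe_mul, mul_smul_comm])

/-- `L^∞(Ω, μ)`: the algebra of essentially bounded measurable functions `Ω → ℂ` modulo
equality `μ`-almost everywhere, realized as the subalgebra of the algebra of germs along
the `μ`-a.e. filter consisting of germs of essentially bounded measurable functions. -/
noncomputable def Linfty {Ω : Type*} [MeasurableSpace Ω] (μ : Measure Ω) :
    Subalgebra ℂ (Filter.Germ (MeasureTheory.ae μ) ℂ) where
  carrier := {x | ∃ f : Ω → ℂ, Measurable f ∧ (∃ C : ℝ, ∀ᵐ ω ∂μ, ‖f ω‖ ≤ C) ∧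
    x = (f : Filter.Germ (MeasureTheory.ae μ) ℂ)}
  mul_mem' := by
    rintro x y ⟨f, hf, ⟨Cf, hCf⟩, rfl⟩ ⟨g, hg, ⟨Cg, hCg⟩, rfl⟩
    refine ⟨f * g, hf.mul hg, ⟨|Cf| * |Cg|, ?_⟩, (Filter.Germ.coe_mul f g).symm⟩
    filter_upwards [hCf, hCg] with ω h1 h2
    calc ‖(f * g) ω‖ = ‖f ω‖ * ‖g ω‖ := by simp [norm_mul]
      _ ≤ |Cf| * |Cg| :=
        mul_le_mul (h1.trans (le_abs_self _)) (h2.trans (le_abs_self _)) (norm_nonneg _)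
          (abs_nonneg _)
  add_mem' := by
    rintro x y ⟨f, hf, ⟨Cf, hCf⟩, rfl⟩ ⟨g, hg, ⟨Cg, hCg⟩, rfl⟩
    refine ⟨f + g, hf.add hg, ⟨|Cf| + |Cg|, ?_⟩, (Filter.Germ.coe_add f g).symm⟩
    filter_upwards [hCf, hCg] with ω h1 h2
    calc ‖(f + g) ω‖ ≤ ‖f ω‖ + ‖g ω‖ := norm_add_le _ _
      _ ≤ |Cf| + |Cg| := add_le_add (h1.trans (le_abs_self _)) (h2.trans (le_abs_self _))
  one_mem' :=
    ⟨fun _ => 1, measurable_const, ⟨1, Filter.Eventually.of_forall fun _ => by simp⟩,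
      (Filter.Germ.coe_one (l := MeasureTheory.ae μ)).symm⟩
  zero_mem' :=
    ⟨fun _ => 0, measurable_const, ⟨0, Filter.Eventually.of_forall fun _ => by simp⟩,
      (Filter.Germ.coe_zero (l := MeasureTheory.ae μ)).symm⟩
  algebraMap_mem' := by
    intro r
    refine ⟨fun _ => r, measurable_const,
      ⟨‖r‖, Filter.Eventually.of_forall fun _ => le_rfl⟩, ?_⟩
    rw [Algebra.algebraMap_eq_smul_one, ← Filter.Germ.coe_one (l := MeasureTheory.ae μ),
      ← Filter.Germ.coe_smul]
    congr 1
    funext ω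
    simp

/-- The element of `L^∞(Ω, μ)` determined by a measurable, essentially bounded function. -/
noncomputable def LinftyMk {Ω : Type*} [MeasurableSpace Ω] (μ : Measure Ω) (f : Ω → ℂ)
    (hf : Measurable f) (C : ℝ) (hC : ∀ᵐ ω ∂μ, ‖f ω‖ ≤ C) : Linfty μ :=
  ⟨(f : Filter.Germ (MeasureTheory.ae μ) ℂ), ⟨f, hf, ⟨C, hC⟩, rfl⟩⟩

/-- The class `[1_F]` in `L^∞(Ω, μ)` of the indicator function of a measurable set `F`. -/
noncomputable def indL {Ω : Type*} [MeasurableSpace Ω] (μ : Measure Ω) (F : Set Ω)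
    (hF : MeasurableSet F) : Linfty μ :=
  LinftyMk μ (F.indicator fun _ => (1 : ℂ)) (measurable_const.indicator hF) 1
    (Filter.Eventually.of_forall fun ω => by
      by_cases h : ω ∈ F <;> simp [Set.indicator_apply, h])

section Helpers

variable {Ω : Type u} [MeasurableSpace Ω] {μ : Measure Ω}

lemma LinftyMk_eq_of_aeeq {f g : Ω → ℂ} {hf hg Cf Cg hCf hCg} (h : f =ᵐ[μ] g) :
    LinftyMk μ f hf Cf hCf = LinftyMk μ g hg Cg hCg :=
  Subtype.ext (Filter.Germ.coe_eq.mpr h)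

lemma LinftyMk_mul {f g : Ω → ℂ} {hf hg Cf Cg hCf hCg hfg Cfg hCfg} :
    LinftyMk μ f hf Cf hCf * LinftyMk μ g hg Cg hCg
      = LinftyMk μ (fun x => f x * g x) hfg Cfg hCfg := by
  apply Subtype.ext
  exact (Filter.Germ.coe_mul f g).symm

lemma LinftyMk_add {f g : Ω → ℂ} {hf hg Cf Cg hCf hCg hfg Cfg hCfg} :
    LinftyMk μ f hf Cf hCf + LinftyMk μ g hg Cg hCg
      = LinftyMk μ (fun x => f x + g x) hfg Cfg hCfg := by
  apply Subtype.ext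
  exact (Filter.Germ.coe_add f g).symm

lemma LinftyMk_sub {f g : Ω → ℂ} {hf hg Cf Cg hCf hCg hfg Cfg hCfg} :
    LinftyMk μ f hf Cf hCf - LinftyMk μ g hg Cg hCg
      = LinftyMk μ (fun x => f x - g x) hfg Cfg hCfg := by
  apply Subtype.ext
  exact (Filter.Germ.coe_sub f g).symm

lemma LinftyMk_one {h1 C1 hC1} : LinftyMk μ (fun _ => (1 : ℂ)) h1 C1 hC1 = 1 := by
  apply Subtype.ext
  exact Filter.Germ.coe_one

lemma LinftyMk_zero {h0 C0 hC0} : LinftyMk μ (fun _ => (0 : ℂ)) h0 C0 hC0 = 0 := by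
  apply Subtype.ext
  exact Filter.Germ.coe_zero

lemma LinftyMk_const (a : ℂ) {ha Ca hCa} :
    LinftyMk μ (fun _ => a) ha Ca hCa = algebraMap ℂ (Linfty μ) a := by
  apply Subtype.ext
  show ((fun _ => a : Ω → ℂ) : Filter.Germ (ae μ) ℂ) = _
  have : ((algebraMap ℂ (Linfty μ) a : Linfty μ) : Filter.Germ (ae μ) ℂ)
      = algebraMap ℂ (Filter.Germ (ae μ) ℂ) a := rfl
  rw [this, Algebra.algebraMap_eq_smul_one, ← Filter.Germ.coe_one (l := ae μ),
    ← Filter.Germ.coe_smul]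
  congr 1
  funext x
  simp

end Helpers

/-- Proposition II.6 and Theorem II.7, first half. Every character `ω` of
`L^∞(Ω, μ)` determines an ultrafilter `𝒰_ω = {F : ω([1_F]) = 1}` on the measure algebra,
and the ultrafilter limit along `𝒰_ω` of any measurable essentially bounded function `f`
is `ω([f])`. -/
theorem character_gives_ultrafilter_and_limit {Ω : Type u} [MeasurableSpace Ω]
    (μ : Measure Ω) (hμ : μ ≠ 0) (hsemi : Semifinite μ) (hdec : Decomposable μ)
    (ω : Linfty μ →ₐ[ℂ] ℂ) :
    IsMeasureUltrafilter μ {F : Set Ω | ∃ hF : MeasurableSet F, ω (indL μ F hF) = 1} ∧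
    ∀ (f : Ω → ℂ) (hf : Measurable f) (C : ℝ) (hC : ∀ᵐ x ∂μ, ‖f x‖ ≤ C),
      UltraLim μ {F : Set Ω | ∃ hF : MeasurableSet F, ω (indL μ F hF) = 1} f
        (ω (LinftyMk μ f hf C hC)) := by
  set U : Set (Set Ω) := {F : Set Ω | ∃ hF : MeasurableSet F, ω (indL μ F hF) = 1} with hUdef
  -- values on idempotents are 0 or 1
  have hidem : ∀ (F : Set Ω) (hF : MeasurableSet F),
      ω (indL μ F hF) = 0 ∨ ω (indL μ F hF) = 1 := by
    intro F hF
    have hsq : indL μ F hF * indL μ F hF = indL μ F hF := by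
      unfold indL
      rw [LinftyMk_mul (hfg := (measurable_const.indicator hF).mul
        (measurable_const.indicator hF)) (Cfg := 1)
        (hCfg := Filter.Eventually.of_forall fun x => by
          by_cases h : x ∈ F <;> simp [Set.indicator_apply, h])]
      apply LinftyMk_eq_of_aeeq
      refine Filter.Eventually.of_forall fun x => ?_
      by_cases h : x ∈ F <;> simp [Set.indicator_apply, h]
    have := congrArg ω hsq
    rw [map_mul] at this
    rcases eq_or_ne (ω (indL μ F hF)) 0 with h0 | h0
    · exact Or.inl h0
    · exact Or.inr (mul_left_cancel₀ h0 (by rw [this, mul_one]))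
  have hinter : ∀ (F G : Set Ω) (hF : MeasurableSet F) (hG : MeasurableSet G),
      indL μ F hF * indL μ G hG = indL μ (F ∩ G) (hF.inter hG) := by
    intro F G hF hG
    unfold indL
    rw [LinftyMk_mul (hfg := (measurable_const.indicator hF).mul
      (measurable_const.indicator hG)) (Cfg := 1)
      (hCfg := Filter.Eventually.of_forall fun x => by
        by_cases h : x ∈ F <;> by_cases h' : x ∈ G <;> simp [Set.indicator_apply, h, h'])]
    apply LinftyMk_eq_of_aeeq
    refine Filter.Eventually.of_forall fun x => ?_
    by_cases h : x ∈ F <;> by_cases h' : x ∈ G <;> simp [Set.indicator_apply, h, h']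
  have hUF : IsMeasureUltrafilter μ U := by
    constructor
    · rintro F ⟨hF, -⟩; exact hF
    · rintro F ⟨hF, hω1⟩ hF0
      have hzero : indL μ F hF = 0 := by
        unfold indL
        rw [← LinftyMk_zero (μ := μ) (h0 := measurable_const) (C0 := 1)
          (hC0 := Filter.Eventually.of_forall fun _ => by simp)]
        apply LinftyMk_eq_of_aeeq
        have : ∀ᵐ x ∂μ, x ∉ F := by
          rw [ae_iff]; simpa using hF0
        filter_upwards [this] with x hx
        simp [Set.indicator_apply, hx]
      rw [hzero, map_zero] at hω1
      exact one_ne_zero hω1.symm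
    · rintro F ⟨hF, hωF⟩ G ⟨hG, hωG⟩
      refine ⟨hF.inter hG, ?_⟩
      rw [← hinter F G hF hG, map_mul, hωF, hωG, mul_one]
    · rintro F ⟨hF, hωF⟩ G hG hnull
      refine ⟨hG, ?_⟩
      have hFG : indL μ F hF * indL μ G hG = indL μ F hF := by
        rw [hinter F G hF hG]
        unfold indL
        apply LinftyMk_eq_of_aeeq
        have : ∀ᵐ x ∂μ, x ∉ F \ G := by
          rw [ae_iff]; simp only [not_not]; exact hnull
        filter_upwards [this] with x hx
        by_cases hxF : x ∈ F
        · have hxG : x ∈ G := by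
            by_contra h'; exact hx ⟨hxF, h'⟩
          simp [Set.indicator_apply, hxF, hxG]
        · simp [Set.indicator_apply, hxF]
      have := congrArg ω hFG
      rw [map_mul, hωF, one_mul] at this
      exact this
    · intro F hF
      have hsum : indL μ F hF + indL μ Fᶜ hF.compl = 1 := by
        unfold indL
        rw [LinftyMk_add (hfg := (measurable_const.indicator hF).add
          (measurable_const.indicator hF.compl)) (Cfg := 1)
          (hCfg := Filter.Eventually.of_forall fun x => by
            by_cases h : x ∈ F <;> simp [Set.indicator_apply, h])]
        rw [← LinftyMk_one (μ := μ) (h1 := measurable_const) (C1 := 1)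
          (hC1 := Filter.Eventually.of_forall fun _ => by simp)]
        apply LinftyMk_eq_of_aeeq
        refine Filter.Eventually.of_forall fun x => ?_
        by_cases h : x ∈ F <;> simp [Set.indicator_apply, h]
      have hsum' := congrArg ω hsum
      rw [map_add, map_one] at hsum'
      rcases hidem F hF with h0 | h1
      · right
        refine ⟨hF.compl, ?_⟩
        rw [h0, zero_add] at hsum'
        exact hsum'
      · exact Or.inl ⟨hF, h1⟩
  refine ⟨hUF, ?_⟩
  intro f hf C hC ε hε
  set a : ℂ := ω (LinftyMk μ f hf C hC) with ha
  set E : Set Ω := {x | ‖f x - a‖ < ε / 2} with hEdef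
  have hE : MeasurableSet E :=
    measurableSet_lt ((hf.sub measurable_const).norm) measurable_const
  -- E ∈ U
  have hEU : E ∈ U := by
    rcases hUF.mem_or_compl_mem E hE with h | h
    · exact h
    · exfalso
      obtain ⟨hEc, hωc⟩ := h
      set g : Ω → ℂ := Eᶜ.indicator (fun x => (f x - a)⁻¹) with hgdef
      have hg : Measurable g := ((hf.sub measurable_const).inv).indicator hE.compl
      have hgD : ∀ᵐ x ∂μ, ‖g x‖ ≤ (ε / 2)⁻¹ := by
        refine Filter.Eventually.of_forall fun x => ?_
        by_cases hx : x ∈ Eᶜ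
        · have hxE : ¬ ‖f x - a‖ < ε / 2 := hx
          push_neg at hxE
          rw [hgdef]
          simp only [Set.indicator_of_mem hx, norm_inv]
          exact inv_anti₀ (half_pos hε) hxE
        · rw [hgdef]
          simp only [Set.indicator_of_notMem hx, norm_zero]
          positivity
      have hkey : LinftyMk μ g hg ((ε/2)⁻¹) hgD *
          (LinftyMk μ f hf C hC - LinftyMk μ (fun _ => a) measurable_const ‖a‖
            (Filter.Eventually.of_forall fun _ => le_rfl)) = indL μ Eᶜ hE.compl := by
        rw [LinftyMk_sub (hfg := hf.sub measurable_const) (Cfg := C + ‖a‖)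
          (hCfg := by
            refine hC.mono fun x hx => ?_
            calc ‖f x - a‖ ≤ ‖f x‖ + ‖a‖ := norm_sub_le _ _
              _ ≤ C + ‖a‖ := add_le_add hx le_rfl)]
        rw [LinftyMk_mul (f := g) (g := fun x => f x - a) (hfg := hg.mul (hf.sub measurable_const))
          (Cfg := (ε/2)⁻¹ * (C + ‖a‖))
          (hCfg := by
            refine (hgD.and hC).mono fun x ⟨hx, hx'⟩ => ?_
            calc ‖g x * (f x - a)‖ = ‖g x‖ * ‖f x - a‖ := by simp [norm_mul]
              _ ≤ (ε/2)⁻¹ * (C + ‖a‖) := by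
                refine mul_le_mul hx ?_ (norm_nonneg _) (by positivity)
                calc ‖f x - a‖ ≤ ‖f x‖ + ‖a‖ := norm_sub_le _ _
                  _ ≤ C + ‖a‖ := add_le_add hx' le_rfl)]
        unfold indL
        apply LinftyMk_eq_of_aeeq
        refine Filter.Eventually.of_forall fun x => ?_
        by_cases hx : x ∈ Eᶜ
        · have hne : f x - a ≠ 0 := by
            intro h0
            have hxE : ¬ ‖f x - a‖ < ε / 2 := hx
            rw [h0] at hxE
            simp at hxE
            linarith
          show g x * (f x - a) = Eᶜ.indicator (fun _ => (1:ℂ)) x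
          rw [hgdef]
          simp only [Set.indicator_of_mem hx]
          exact inv_mul_cancel₀ hne
        · show g x * (f x - a) = Eᶜ.indicator (fun _ => (1:ℂ)) x
          rw [hgdef]
          simp only [Set.indicator_of_notMem hx, zero_mul]
      have := congrArg ω hkey
      rw [map_mul, map_sub, hωc] at this
      rw [LinftyMk_const a, AlgHom.commutes] at this
      simp only [Algebra.algebraMap_self, RingHom.id_apply] at this
      rw [← ha, sub_self, mul_zero] at this
      exact zero_ne_one this
  refine ⟨E, hEU, ?_⟩
  intro X hXE hX hXpos hXfin
  haveI : Fact (μ X < ⊤) := ⟨hXfin⟩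
  have ht : (0:ℝ) < (μ X).toReal := ENNReal.toReal_pos hXpos.ne' hXfin.ne
  have hint : Integrable f (μ.restrict X) := by
    refine Integrable.mono' (integrable_const C) hf.aestronglyMeasurable.restrict ?_
    exact ae_restrict_of_ae hC
  have hconst : Integrable (fun _ => a) (μ.restrict X) := integrable_const a
  have h1 : ∫ x in X, (f x - a) ∂μ = (∫ x in X, f x ∂μ) - (μ X).toReal • a := by
    rw [integral_sub hint hconst, setIntegral_const]
    rfl
  have h2 : (μ X).toReal⁻¹ • (∫ x in X, f x ∂μ) - a
      = (μ X).toReal⁻¹ • (∫ x in X, (f x - a) ∂μ) := by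
    rw [h1, smul_sub, smul_smul, inv_mul_cancel₀ ht.ne', one_smul]
  rw [h2, norm_smul]
  have hbound : ‖∫ x in X, (f x - a) ∂μ‖ ≤ (ε/2) * (μ X).toReal := by
    refine norm_setIntegral_le_of_norm_le_const hXfin (fun x hx => ?_)
    exact le_of_lt (hXE hx)
  calc ‖(μ X).toReal⁻¹‖ * ‖∫ x in X, (f x - a) ∂μ‖
      = (μ X).toReal⁻¹ * ‖∫ x in X, (f x - a) ∂μ‖ := by
        rw [Real.norm_eq_abs, abs_of_nonneg (by positivity)]
    _ ≤ (μ X).toReal⁻¹ * ((ε/2) * (μ X).toReal) :=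
        mul_le_mul_of_nonneg_left hbound (by positivity)
    _ = ε/2 := by field_simp
    _ < ε := by linarith
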